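/- (Converse direction) Let G be a graph on {1,...,n} and suppose there exist a vertex i, neighbors j, k ∈ N_G[i], and an integer ℓ with j < ℓ < k and ℓ ∉ N_G[i]. Then Δ(G) is not sortable with respect to this labeling: there exist faces F, H of Δ(G) whose sorting produces a pair not contained in Δ(G) × Δ(G). -/

import Mathlib

/-- The first component of the sorting `sort(F,G)`: the elements at odd
positions (1-indexed) of the weakly increasing list of the multiset union of `F` and `G`. -/
def sortFst (F G : Finset ℕ) : Finset ℕ :=
  ((((F.val + G.val).sort (· ≤ ·)).zipIdx.filter (fun p => p.2 % 2 = 0)).map Prod.fst).toFinset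

/-- The second component of the sorting `sort(F,G)`: the elements at even
positions (1-indexed). -/
def sortSnd (F G : Finset ℕ) : Finset ℕ :=
  ((((F.val + G.val).sort (· ≤ ·)).zipIdx.filter (fun p => p.2 % 2 = 1)).map Prod.fst).toFinset

def IsIndep (G : SimpleGraph ℕ) (F : Finset ℕ) : Prop :=
  ∀ a ∈ F, ∀ b ∈ F, ¬ G.Adj a b

lemma sort_eq_of (s : Multiset ℕ) (a b c : ℕ) (hab : a ≤ b) (hbc : b ≤ c)
    (h : s = ({a, b, c} : Multiset ℕ)) : s.sort (· ≤ ·) = [a, b, c] := by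
  apply (fun hp hs1 hs2 => List.Perm.eq_of_pairwise' (r := (· ≤ ·)) hs1 hs2 hp)
    (Multiset.coe_eq_coe.mp (by rw [Multiset.sort_eq, h]; rfl))
    (Multiset.pairwise_sort _ _)
  simp [List.Pairwise, hab, hbc, hab.trans hbc]

lemma sortFst_eq (F H : Finset ℕ) (a b c : ℕ) (hab : a ≤ b) (hbc : b ≤ c)
    (h : F.val + H.val = ({a, b, c} : Multiset ℕ)) : sortFst F H = {a, c} := by
  rw [sortFst, sort_eq_of _ a b c hab hbc h]
  simp [List.zipIdx, List.filter]

theorem stmt_14 (G : SimpleGraph ℕ) (i j k l : ℕ)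
    (hj : j = i ∨ G.Adj i j) (hk : k = i ∨ G.Adj i k)
    (hjl : j < l) (hlk : l < k)
    (hl : l ≠ i ∧ ¬ G.Adj i l) :
    ∃ F H : Finset ℕ, IsIndep G F ∧ IsIndep G H ∧
      (¬ IsIndep G (sortFst F H) ∨ ¬ IsIndep G (sortSnd F H)) := by
  rcases hl.1.lt_or_gt with hli | hil
  · -- l < i, so j < l < i, hence j ≠ i and G.Adj i j
    have hji : j ≠ i := by omega
    have hadj : G.Adj i j := hj.resolve_left hji
    refine ⟨{l, i}, {j}, ?_, ?_, Or.inl ?_⟩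
    · intro a ha b hb hab
      simp only [Finset.mem_insert, Finset.mem_singleton] at ha hb
      rcases ha with rfl | rfl <;> rcases hb with rfl | rfl
      · exact hab.ne rfl
      · exact hl.2 hab.symm
      · exact hl.2 hab
      · exact hab.ne rfl
    · intro a ha b hb hab
      simp only [Finset.mem_singleton] at ha hb
      subst ha; subst hb; exact hab.ne rfl
    · have hm : ({l, i} : Finset ℕ).val + ({j} : Finset ℕ).val
          = ({j, l, i} : Multiset ℕ) := by
        rw [Finset.insert_val_of_notMem (by simp [hl.1])]
        show (l ::ₘ i ::ₘ j ::ₘ 0 : Multiset ℕ) = (j ::ₘ l ::ₘ i ::ₘ 0 : Multiset ℕ)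
        rw [Multiset.cons_swap i j, Multiset.cons_swap l j]
      rw [sortFst_eq _ _ j l i hjl.le hli.le hm]
      intro hind
      exact hind j (by simp) i (by simp) hadj.symm
  · -- i < l, so i < l < k, hence k ≠ i and G.Adj i k
    have hki : k ≠ i := by omega
    have hadj : G.Adj i k := hk.resolve_left hki
    refine ⟨{i, l}, {k}, ?_, ?_, Or.inl ?_⟩
    · intro a ha b hb hab
      simp only [Finset.mem_insert, Finset.mem_singleton] at ha hb
      rcases ha with rfl | rfl <;> rcases hb with rfl | rfl
      · exact hab.ne rfl
      · exact hl.2 hab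
      · exact hl.2 hab.symm
      · exact hab.ne rfl
    · intro a ha b hb hab
      simp only [Finset.mem_singleton] at ha hb
      subst ha; subst hb; exact hab.ne rfl
    · have hm : ({i, l} : Finset ℕ).val + ({k} : Finset ℕ).val
          = ({i, l, k} : Multiset ℕ) := by
        rw [Finset.insert_val_of_notMem (by simp [hil.ne])]
        rfl
      rw [sortFst_eq _ _ i l k hil.le hlk.le hm]
      intro hind
      exact hind i (by simp) k (by simp) hadj
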